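/- Let g = h ⊕ m be a finite-dimensional real Lie algebra with a vector-space direct sum decomposition, ⟨·,·⟩ a naturally reductive inner product on m, and f: m → m a metric f-structure. Set m₁ = im f and m₂ = ker f, and assume [m₁, m₁] ⊆ m₂ ⊕ h. Then, with (∇_X f)(Y) = ½([X, fY]_m − f([X,Y]_m)) and T(X,Y) = ¼ f((∇_{fX} f)(fY) − (∇_{f²X} f)(f²Y)), one has T(X,Y) = 0 for all X, Y ∈ m. (A naturally reductive homogeneous space with an invariant metric f-structure satisfying [m₁,m₁] ⊆ m₂ ⊕ h is a Hermitian f-manifold.) -/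

import Mathlib

/-- A naturally reductive homogeneous space with an invariant metric
f-structure satisfying [m₁, m₁] ⊆ m₂ ⊕ h (m₁ = im f, m₂ = ker f) is a
Hermitian f-manifold: T(X,Y) = 0 for all X, Y ∈ m. -/
theorem stmt_16 (g : Type*) [LieRing g] [LieAlgebra ℝ g] [FiniteDimensional ℝ g]
    (h m : Submodule ℝ g) (hc : IsCompl h m)
    (B : m →ₗ[ℝ] m →ₗ[ℝ] ℝ)
    (hBsymm : ∀ X Y : m, B X Y = B Y X)
    (hBpos : ∀ X : m, X ≠ 0 → 0 < B X X)
    (hBnat : ∀ X Y Z : m,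
      B (m.linearProjOfIsCompl h hc.symm ⁅(X : g), (Y : g)⁆) Z =
        B X (m.linearProjOfIsCompl h hc.symm ⁅(Y : g), (Z : g)⁆))
    (f : m →ₗ[ℝ] m)
    (hf3 : ∀ X : m, f (f (f X)) + f X = 0)
    (hfskew : ∀ X Y : m, B (f X) Y + B X (f Y) = 0)
    -- [m₁, m₁] ⊆ m₂ ⊕ h, where m₁ = im f and m₂ = ker f
    (hbr : ∀ X Y : m, X ∈ LinearMap.range f → Y ∈ LinearMap.range f →
      ⁅(X : g), (Y : g)⁆ ∈ (LinearMap.ker f).map m.subtype ⊔ h)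
    (nabla : m → m → m)
    (hnabla : ∀ X Y : m, nabla X Y = (1 / 2 : ℝ) •
      (m.linearProjOfIsCompl h hc.symm ⁅(X : g), (f Y : g)⁆ -
        f (m.linearProjOfIsCompl h hc.symm ⁅(X : g), (Y : g)⁆)))
    (T : m → m → m)
    (hT : ∀ X Y : m, T X Y = (1 / 4 : ℝ) •
      f (nabla (f X) (f Y) - nabla (f (f X)) (f (f Y)))) :
    ∀ X Y : m, T X Y = 0 := by
  intro X Y
  -- key: for U, V in range f, f (proj ⁅U,V⁆) = 0
  have key : ∀ U V : m, U ∈ LinearMap.range f → V ∈ LinearMap.range f →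
      f (m.linearProjOfIsCompl h hc.symm ⁅(U : g), (V : g)⁆) = 0 := by
    intro U V hU hV
    obtain ⟨y, hy, z, hz, hyz⟩ := Submodule.mem_sup.mp (hbr U V hU hV)
    obtain ⟨k, hk, rfl⟩ := hy
    have hproj : m.linearProjOfIsCompl h hc.symm ⁅(U : g), (V : g)⁆ = k := by
      rw [← hyz, map_add]
      erw [Submodule.linearProjOfIsCompl_apply_right' hc.symm (x := z) hz]
      rw [add_zero]
      exact Submodule.linearProjOfIsCompl_apply_left hc.symm k
    rw [hproj]
    exact hk
  have h1 : f (nabla (f X) (f Y)) = 0 := by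
    rw [hnabla, map_smul, map_sub,
      key (f X) (f (f Y)) ⟨X, rfl⟩ ⟨f Y, rfl⟩,
      key (f X) (f Y) ⟨X, rfl⟩ ⟨Y, rfl⟩, map_zero, sub_zero, smul_zero]
  have hffY : f (f (f Y)) = -(f Y) := by
    exact eq_neg_of_add_eq_zero_left (hf3 Y)
  have h2 : f (nabla (f (f X)) (f (f Y))) = 0 := by
    rw [hnabla, map_smul, map_sub]
    have e1 : f (m.linearProjOfIsCompl h hc.symm ⁅(f (f X) : g), (f (f (f Y)) : g)⁆) = 0 := by
      rw [hffY]
      have : ((-(f Y) : m) : g) = -((f Y : m) : g) := rfl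
      rw [this, lie_neg, map_neg, map_neg,
        key (f (f X)) (f Y) ⟨f X, rfl⟩ ⟨Y, rfl⟩, neg_zero]
    rw [e1, key (f (f X)) (f (f Y)) ⟨f X, rfl⟩ ⟨f Y, rfl⟩,
      map_zero, sub_zero, smul_zero]
  rw [hT, map_sub, h1, h2, sub_zero, smul_zero]
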